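/- For every p ≥ 1 there exists a constant C_p ≥ 1 such that for every finite metric space (X,d) there exists a non-expansive map f: X → ℝ (i.e., |f(x)−f(y)| ≤ d(x,y) for all x,y ∈ X) satisfying Σ_{u,v∈X} d(u,v)^p ≤ C_p · α(X,d)^p · Σ_{u,v∈X} |f(u)−f(v)|^p. -/

import Mathlib

noncomputable section

open scoped Classical

namespace Formal

/-- A random partition of a finite set `X`: a finitely supported probability distribution
over partitions of `X`, a partition being encoded by the map sending each point to its
block. -/
structure RandPartition (X : Type) [Fintype X] [DecidableEq X] where
  prob : (X → Finset X) → ℝ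
  nonneg : ∀ P, 0 ≤ prob P
  sum_one : ∑ P : X → Finset X, prob P = 1
  isPartition : ∀ P, prob P ≠ 0 → ∀ x : X, x ∈ P x ∧ ∀ y ∈ P x, P y = P x

/-- A random partition is `Δ`-bounded (w.r.t. the distance `d`) if every block of every
partition in its support has diameter at most `Δ`. -/
def RandPartition.IsBounded {X : Type} [Fintype X] [DecidableEq X]
    (μ : RandPartition X) (d : X → X → ℝ) (Δ : ℝ) : Prop :=
  ∀ P, μ.prob P ≠ 0 → ∀ x : X, ∀ y ∈ P x, ∀ z ∈ P x, d y z ≤ Δ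

/-- A random partition is `α`-padded (at scale `Δ`) if, for every `x`, with probability
at least `1/2` the closed ball of radius `Δ/α` about `x` is contained in the block
containing `x`. -/
def RandPartition.IsPadded {X : Type} [Fintype X] [DecidableEq X]
    (μ : RandPartition X) (d : X → X → ℝ) (Δ α : ℝ) : Prop :=
  ∀ x : X, (1 : ℝ) / 2 ≤
    ∑ P : X → Finset X, if ∀ y, d x y ≤ Δ / α → y ∈ P x then μ.prob P else 0

/-- The modulus of padded decomposability `α(X,d)`: the least `α ≥ 1` such that for every
`Δ > 0` the space admits a `Δ`-bounded `α`-padded random partition. -/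
def paddedModulus (X : Type) [Fintype X] [DecidableEq X] (d : X → X → ℝ) : ℝ :=
  sInf {α : ℝ | 1 ≤ α ∧
    ∀ Δ : ℝ, 0 < Δ → ∃ μ : RandPartition X, μ.IsBounded d Δ ∧ μ.IsPadded d Δ α}

/-! ### Auxiliary machinery -/

section Aux

set_option linter.unusedSectionVars false

open Finset

/-- Counting boolean functions with finitely many prescribed values. -/
private lemma count_bool {γ : Type} [Fintype γ] [DecidableEq γ] (s : Finset γ) (t : γ → Bool) :
    (Finset.univ.filter fun g : γ → Bool => ∀ a ∈ s, g a = t a).card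
      = 2 ^ (Fintype.card γ - s.card) := by
  have h1 : (Finset.univ.filter fun g : γ → Bool => ∀ a ∈ s, g a = t a)
      = Fintype.piFinset (fun a : γ => if a ∈ s then {t a} else Finset.univ) := by
    ext g
    simp only [Finset.mem_filter, Finset.mem_univ, true_and, Fintype.mem_piFinset]
    constructor
    · intro h a
      by_cases ha : a ∈ s
      · simp [ha, h a ha]
      · simp [ha]
    · intro h a ha
      have := h a
      simpa [ha] using this
  rw [h1, Fintype.card_piFinset]
  have h2 : ∀ a : γ, (if a ∈ s then ({t a} : Finset Bool) else Finset.univ).card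
      = if a ∈ s then 1 else 2 := by
    intro a; split <;> simp
  rw [Finset.prod_congr rfl fun a _ => h2 a, Finset.prod_ite]
  simp only [Finset.prod_const_one, Finset.prod_const, one_mul]
  congr 1
  have h3 : Finset.univ.filter (fun a : γ => ¬ a ∈ s) = Finset.univ \ s := by
    ext a; simp
  rw [h3, Finset.card_sdiff_of_subset (Finset.subset_univ s), Finset.card_univ]

/-- A sum over a function space of a product factors into a product of sums. -/
private lemma sum_fun_prod {κ β : Type} [Fintype κ] [DecidableEq κ] [Fintype β]
    (F : κ → β → ℝ) : ∑ g : κ → β, ∏ i, F i (g i) = ∏ i, ∑ b, F i b := by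
  rw [Finset.prod_univ_sum (fun _ : κ => (Finset.univ : Finset β)) F, Fintype.piFinset_univ]

/-- From a lower bound on a weighted average extract a point satisfying the bound. -/
private lemma exists_point_ge {Ω : Type} [Fintype Ω] [Nonempty Ω] (W g : Ω → ℝ)
    (hW : ∀ ω, 0 ≤ W ω) (hsum : ∑ ω : Ω, W ω = 1) {t : ℝ} (ht : t ≤ ∑ ω : Ω, W ω * g ω) :
    ∃ ω : Ω, t ≤ g ω := by
  obtain ⟨ω0, -, hmax⟩ := Finset.exists_max_image Finset.univ g Finset.univ_nonempty
  refine ⟨ω0, le_trans ht ?_⟩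
  calc ∑ ω, W ω * g ω
      ≤ ∑ ω, W ω * g ω0 :=
        Finset.sum_le_sum fun ω _ =>
          mul_le_mul_of_nonneg_left (hmax ω (Finset.mem_univ _)) (hW ω)
    _ = g ω0 := by rw [← Finset.sum_mul, hsum, one_mul]

variable {X : Type} [MetricSpace X] [Fintype X] [DecidableEq X]

private def sball (u : X) (s : ℝ) : Finset X := Finset.univ.filter fun w => dist u w ≤ s

private lemma mem_sball {u w : X} {s : ℝ} : w ∈ sball u s ↔ dist u w ≤ s := by
  simp [sball]

private def mm (X : Type) [Fintype X] : ℕ := Fintype.card X / 2 + 1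

private def rset (u : X) : Set ℝ :=
  {s : ℝ | mm X ≤ (sball u s).card ∧ ∃ w : X, s = dist u w}

private lemma rset_finite (u : X) : (rset u).Finite := by
  apply Set.Finite.subset (Set.finite_range (fun w : X => dist u w))
  rintro s ⟨-, w, rfl⟩
  exact ⟨w, rfl⟩

private lemma rset_nonempty (hn : 2 ≤ Fintype.card X) (u : X) : (rset u).Nonempty := by
  have hne : Nonempty X := Fintype.card_pos_iff.mp (by omega)
  obtain ⟨w0, -, hw0⟩ := Finset.exists_max_image Finset.univ (fun w : X => dist u w)
    Finset.univ_nonempty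
  refine ⟨dist u w0, ?_, ⟨w0, rfl⟩⟩
  have h1 : sball u (dist u w0) = Finset.univ := by
    ext w; simp [sball, hw0 w (Finset.mem_univ w)]
  rw [h1, Finset.card_univ]
  unfold mm; omega

private def rr (u : X) : ℝ := sInf (rset u)

private lemma rr_mem (hn : 2 ≤ Fintype.card X) (u : X) : rr u ∈ rset u :=
  (rset_nonempty hn u).csInf_mem (rset_finite u)

private lemma rr_card (hn : 2 ≤ Fintype.card X) (u : X) : mm X ≤ (sball u (rr u)).card :=
  (rr_mem hn u).1

private lemma rr_le (hn : 2 ≤ Fintype.card X) {u : X} {s : ℝ}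
    (h : mm X ≤ (sball u s).card) : rr u ≤ s := by
  have hpos : 0 < (sball u s).card := lt_of_lt_of_le (by unfold mm; omega) h
  obtain ⟨w0, hw0mem, hw0⟩ := Finset.exists_max_image (sball u s)
    (fun w : X => dist u w) (Finset.card_pos.mp hpos)
  have h1 : sball u s ⊆ sball u (dist u w0) := fun w hw => mem_sball.2 (hw0 w hw)
  have h2 : dist u w0 ∈ rset u := ⟨le_trans h (Finset.card_le_card h1), w0, rfl⟩
  exact le_trans (csInf_le (rset_finite u).bddBelow h2) (mem_sball.1 hw0mem)

private lemma rr_card_lt (hn : 2 ≤ Fintype.card X) {u : X} {s : ℝ} (h : s < rr u) :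
    (sball u s).card < mm X := by
  by_contra hc
  exact absurd (rr_le hn (le_of_not_gt hc)) (not_le.mpr h)

private lemma rr_pos (hn : 2 ≤ Fintype.card X) (u : X) : 0 < rr u := by
  by_contra h
  push_neg at h
  have hcard : 2 ≤ (sball u (rr u)).card := le_trans (by unfold mm; omega) (rr_card hn u)
  obtain ⟨w, hw, hwu⟩ := Finset.exists_mem_ne
    (lt_of_lt_of_le one_lt_two hcard) u
  have h1 : dist u w ≤ rr u := mem_sball.1 hw
  have h2 : 0 < dist u w := dist_pos.mpr (Ne.symm hwu)
  linarith

private lemma rr_lip (hn : 2 ≤ Fintype.card X) (u v : X) : rr v ≤ rr u + dist u v := by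
  apply rr_le hn
  refine le_trans (rr_card hn u) (Finset.card_le_card ?_)
  intro w hw
  rw [mem_sball] at hw ⊢
  calc dist v w ≤ dist v u + dist u w := dist_triangle _ _ _
    _ ≤ rr u + dist u v := by rw [dist_comm v u]; linarith

private lemma rr_pair (hn : 2 ≤ Fintype.card X) (u v : X) : dist u v ≤ rr u + rr v := by
  have h1 : 0 < ((sball u (rr u)) ∩ (sball v (rr v))).card := by
    have hadd := Finset.card_union_add_card_inter (sball u (rr u)) (sball v (rr v))
    have hle : (sball u (rr u) ∪ sball v (rr v)).card ≤ Fintype.card X := by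
      rw [← Finset.card_univ]; exact Finset.card_le_card (Finset.subset_univ _)
    have h2 := rr_card hn u
    have h3 := rr_card hn v
    unfold mm at h2 h3
    omega
  obtain ⟨w, hw⟩ := Finset.card_pos.mp h1
  rw [Finset.mem_inter] at hw
  calc dist u v ≤ dist u w + dist w v := dist_triangle _ _ _
    _ ≤ rr u + rr v := by
        have := mem_sball.1 hw.1
        have h4 := mem_sball.1 hw.2
        rw [dist_comm w v]; linarith

private def kz (u : X) : ℤ := Int.log 2 (rr u)

private lemma kz_lb (hn : 2 ≤ Fintype.card X) (u : X) : (2:ℝ) ^ (kz u) ≤ rr u := by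
  have := Int.zpow_log_le_self (b := 2) (by norm_num) (rr_pos hn u)
  simpa [kz] using this

private lemma kz_ub (u : X) : rr u < (2:ℝ) ^ (kz u + 1) := by
  have := Int.lt_zpow_succ_log_self (b := 2) (by norm_num) (rr u)
  simpa [kz] using this

private def KK (X : Type) [MetricSpace X] [Fintype X] [DecidableEq X] : Finset ℤ :=
  Finset.univ.biUnion fun u : X => ({kz u - 1, kz u, kz u + 1} : Finset ℤ)

private lemma kz_mem_lo (u : X) : kz u - 1 ∈ KK X :=
  Finset.mem_biUnion.mpr ⟨u, Finset.mem_univ u, by simp⟩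

private lemma kz_mem (u : X) : kz u ∈ KK X :=
  Finset.mem_biUnion.mpr ⟨u, Finset.mem_univ u, by simp⟩

private lemma kz_mem_hi (u : X) : kz u + 1 ∈ KK X :=
  Finset.mem_biUnion.mpr ⟨u, Finset.mem_univ u, by simp⟩

private abbrev II (X : Type) [MetricSpace X] [Fintype X] [DecidableEq X] : Type :=
  {k : ℤ // k ∈ KK X}

private def Df (i : II X) : ℝ := (2:ℝ) ^ (i.1) / 4

private lemma Df_pos (i : II X) : 0 < Df i := by
  unfold Df
  positivity

private abbrev OM (X : Type) [MetricSpace X] [Fintype X] [DecidableEq X] : Type :=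
  (II X → X → Finset X) × ((II X × Finset X) → Bool)

private def SSet (ω : OM X) : Finset X :=
  Finset.univ.filter fun x => ω.2 (⟨kz x, kz_mem x⟩, ω.1 ⟨kz x, kz_mem x⟩ x) = false

private def ff (ω : OM X) (x : X) : ℝ := Metric.infDist x (↑(SSet ω) : Set X)

private lemma ff_lip (ω : OM X) (x y : X) : |ff ω x - ff ω y| ≤ dist x y := by
  rw [abs_sub_le_iff]
  constructor
  · have h := Metric.infDist_le_infDist_add_dist (x := x) (y := y) (s := (↑(SSet ω) : Set X))
    unfold ff
    linarith
  · have h := Metric.infDist_le_infDist_add_dist (x := y) (y := x) (s := (↑(SSet ω) : Set X))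
    unfold ff
    rw [dist_comm y x] at h
    linarith

private def trip (u : X) : Finset (II X) :=
  Finset.univ.filter fun i => i.1 = kz u - 1 ∨ i.1 = kz u ∨ i.1 = kz u + 1

private lemma mem_trip {u : X} {i : II X} :
    i ∈ trip u ↔ (i.1 = kz u - 1 ∨ i.1 = kz u ∨ i.1 = kz u + 1) := by
  simp [trip]

private lemma card_trip (u : X) : (trip u).card = 3 := by
  have h1 : trip u = ({⟨kz u - 1, kz_mem_lo u⟩, ⟨kz u, kz_mem u⟩,
      ⟨kz u + 1, kz_mem_hi u⟩} : Finset (II X)) := by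
    ext i
    simp [mem_trip, Subtype.ext_iff]
  rw [h1]
  rw [Finset.card_insert_of_notMem (by
      simp only [Finset.mem_insert, Finset.mem_singleton, Subtype.mk.injEq]
      omega),
    Finset.card_insert_of_notMem (by
      simp only [Finset.mem_singleton, Subtype.mk.injEq]
      omega),
    Finset.card_singleton]

private def padsE (α : ℝ) (u : X) (ω : OM X) : Prop :=
  ∀ i ∈ trip u, ∀ y : X, dist u y ≤ Df i / α → y ∈ ω.1 i u

private def bitsU (u : X) (ω : OM X) : Prop :=
  ∀ i ∈ trip u, ω.2 (i, ω.1 i u) = true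

private def bitV (v : X) (ω : OM X) : Prop :=
  ω.2 (⟨kz v, kz_mem v⟩, ω.1 ⟨kz v, kz_mem v⟩ v) = false

private def condE (α : ℝ) (u v : X) (ω : OM X) : Prop :=
  padsE α u ω ∧ bitsU u ω ∧ bitV v ω

private def NN (X : Type) [MetricSpace X] [Fintype X] [DecidableEq X] : ℝ :=
  2 ^ (Fintype.card (II X × Finset X))

private lemma NN_pos : 0 < NN X := by unfold NN; positivity

private def WW (μ : II X → RandPartition X) (ω : OM X) : ℝ :=
  (∏ i : II X, (μ i).prob (ω.1 i)) / NN X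

private lemma WW_nonneg (μ : II X → RandPartition X) (ω : OM X) : 0 ≤ WW μ ω :=
  div_nonneg (Finset.prod_nonneg fun i _ => (μ i).nonneg _) (le_of_lt NN_pos)

private lemma WW_sum (μ : II X → RandPartition X) : ∑ ω : OM X, WW μ ω = 1 := by
  rw [Fintype.sum_prod_type]
  have hb : ∀ a : II X → X → Finset X,
      ∑ _b : (II X × Finset X) → Bool, WW μ (a, _b) = ∏ i : II X, (μ i).prob (a i) := by
    intro a
    have hc : ∀ _b : (II X × Finset X) → Bool,
        WW μ (a, _b) = (∏ i : II X, (μ i).prob (a i)) / NN X := fun _b => rfl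
    rw [Finset.sum_congr rfl fun b _ => hc b, Finset.sum_const, Finset.card_univ,
      Fintype.card_fun]
    unfold NN
    simp only [nsmul_eq_mul, Fintype.card_bool]
    push_cast
    field_simp
  rw [Finset.sum_congr rfl fun a _ => hb a]
  rw [sum_fun_prod (fun i P => (μ i).prob P)]
  simp [RandPartition.sum_one]

private lemma geom (hn : 2 ≤ Fintype.card X) {α : ℝ} (hα : 1 ≤ α)
    (μ : II X → RandPartition X) (u v : X) (ω : OM X)
    (hsup : ∀ i : II X, (μ i).prob (ω.1 i) ≠ 0)
    (hc : condE α u v ω) :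
    rr u / (64 * α) ≤ |ff ω u - ff ω v| := by
  have hα0 : (0:ℝ) < α := lt_of_lt_of_le one_pos hα
  have hru : 0 < rr u := rr_pos hn u
  have hv : v ∈ SSet ω := Finset.mem_filter.mpr ⟨Finset.mem_univ v, hc.2.2⟩
  have hfarS : ∀ y : X, y ∈ SSet ω → rr u / (64 * α) ≤ dist u y := by
    intro y hy
    by_contra hlt
    push_neg at hlt
    have hduy : dist u y ≤ rr u / (64 * α) := le_of_lt hlt
    have hρle : rr u / (64 * α) ≤ rr u / 64 := by
      rw [div_le_div_iff₀ (by positivity) (by norm_num)]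
      nlinarith
    have hry_lb : rr u - rr u / 64 ≤ rr y := by
      have h := rr_lip hn y u
      rw [dist_comm y u] at h
      linarith
    have hry_ub : rr y ≤ rr u + rr u / 64 := by
      have h := rr_lip hn u y
      linarith
    have hry_pos : 0 < rr y := rr_pos hn y
    have hlb2 : (2:ℝ) ^ (kz u) ≤ rr u := kz_lb hn u
    have hub2 : rr u < (2:ℝ) ^ (kz u + 1) := kz_ub u
    have e1 : (2:ℝ) ^ (kz u + 1) = 2 * (2:ℝ) ^ (kz u) := by
      rw [zpow_add_one₀ (by norm_num : (2:ℝ) ≠ 0)]; ring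
    have e2 : (2:ℝ) ^ (kz u - 1) = (2:ℝ) ^ (kz u) / 2 := by
      rw [zpow_sub_one₀ (by norm_num : (2:ℝ) ≠ 0)]; ring
    have e3 : (2:ℝ) ^ (kz u + 2) = 4 * (2:ℝ) ^ (kz u) := by
      rw [show kz u + 2 = (kz u + 1) + 1 by ring,
        zpow_add_one₀ (by norm_num : (2:ℝ) ≠ 0), e1]; ring
    have hky_lb : kz u - 1 ≤ kz y := by
      have h1 : (2:ℝ) ^ (kz u - 1) ≤ rr y := by rw [e2]; linarith
      have := (Int.zpow_le_iff_le_log (b := 2) (by norm_num) hry_pos).mp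
        (by exact_mod_cast h1)
      simpa [kz] using this
    have hky_ub : kz y ≤ kz u + 1 := by
      have h1 : rr y < (2:ℝ) ^ (kz u + 2) := by rw [e3]; linarith
      have := (Int.lt_zpow_iff_log_lt (b := 2) (by norm_num) hry_pos).mp
        (by exact_mod_cast h1)
      have h2 : kz y < kz u + 2 := by simpa [kz] using this
      omega
    have hitrip : (⟨kz y, kz_mem y⟩ : II X) ∈ trip u := mem_trip.mpr (by simp; omega)
    have hkzy_lb : (2:ℝ) ^ (kz u) / 2 ≤ (2:ℝ) ^ (kz y) := by
      rw [← e2]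
      exact zpow_le_zpow_right₀ (by norm_num) (by omega)
    have hDf : rr u / (64 * α) ≤ Df (⟨kz y, kz_mem y⟩ : II X) / α := by
      have hkey : rr u / 64 ≤ Df (⟨kz y, kz_mem y⟩ : II X) := by
        show rr u / 64 ≤ (2:ℝ) ^ (kz y) / 4
        linarith
      calc rr u / (64 * α) = (rr u / 64) / α := by rw [div_div]
        _ ≤ Df (⟨kz y, kz_mem y⟩ : II X) / α := by gcongr
    have hyblk : y ∈ ω.1 ⟨kz y, kz_mem y⟩ u :=
      hc.1 ⟨kz y, kz_mem y⟩ hitrip y (le_trans hduy hDf)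
    have hpart : ω.1 ⟨kz y, kz_mem y⟩ y = ω.1 ⟨kz y, kz_mem y⟩ u :=
      (((μ ⟨kz y, kz_mem y⟩).isPartition (ω.1 ⟨kz y, kz_mem y⟩)
        (hsup ⟨kz y, kz_mem y⟩) u).2) y hyblk
    have hbit : ω.2 (⟨kz y, kz_mem y⟩, ω.1 ⟨kz y, kz_mem y⟩ u) = true :=
      hc.2.1 ⟨kz y, kz_mem y⟩ hitrip
    have hyS : ω.2 (⟨kz y, kz_mem y⟩, ω.1 ⟨kz y, kz_mem y⟩ y) = false :=
      (Finset.mem_filter.mp hy).2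
    rw [hpart, hbit] at hyS
    exact absurd hyS (by simp)
  have hfv : ff ω v = 0 := Metric.infDist_zero_of_mem (Finset.mem_coe.mpr hv)
  have hfu : rr u / (64 * α) ≤ ff ω u := by
    by_contra hlt
    push_neg at hlt
    obtain ⟨y, hy, hdy⟩ :=
      (Metric.infDist_lt_iff ⟨v, Finset.mem_coe.mpr hv⟩).mp hlt
    exact absurd hdy (not_lt.mpr (hfarS y (Finset.mem_coe.mp hy)))
  calc rr u / (64 * α) ≤ ff ω u := hfu
    _ = |ff ω u - ff ω v| := by
        rw [hfv, sub_zero]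
        exact (abs_of_nonneg Metric.infDist_nonneg).symm

private lemma core (hn : 2 ≤ Fintype.card X) {α : ℝ} (hα : 1 ≤ α)
    (μ : II X → RandPartition X)
    (hbd : ∀ i : II X, (μ i).IsBounded (fun x y => dist x y) (Df i))
    (hpd : ∀ i : II X, (μ i).IsPadded (fun x y => dist x y) (Df i) α)
    (u v : X) (hfar : rr u / 2 < dist u v) :
    1 / 128 ≤ ∑ ω : OM X, WW μ ω * (if condE α u v ω then 1 else 0) := by
  have hru : 0 < rr u := rr_pos hn u
  have hlb2 : (2:ℝ) ^ (kz u) ≤ rr u := kz_lb hn u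
  set i1 : II X := ⟨kz u - 1, kz_mem_lo u⟩ with hi1
  set i2 : II X := ⟨kz u, kz_mem u⟩ with hi2
  set i3 : II X := ⟨kz u + 1, kz_mem_hi u⟩ with hi3
  set i4 : II X := ⟨kz v, kz_mem v⟩ with hi4
  set PA : (II X → X → Finset X) → Prop :=
    fun a => ∀ i ∈ trip u, ∀ y : X, dist u y ≤ Df i / α → y ∈ a i u with hPA
  rw [Fintype.sum_prod_type]
  -- inner sum computation
  have hInner : ∀ a : II X → X → Finset X,
      (∑ b : (II X × Finset X) → Bool,
        WW μ (a, b) * (if condE α u v (a, b) then 1 else 0))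
      = (∏ i : II X, (μ i).prob (a i)) * ((if PA a then 1 else 0) * (1 / 16)) := by
    intro a
    rcases eq_or_ne (∏ i : II X, (μ i).prob (a i)) 0 with hz | hz
    · have hW0 : ∀ b : (II X × Finset X) → Bool, WW μ (a, b) = 0 := by
        intro b
        unfold WW
        rw [show (∏ i : II X, (μ i).prob ((a, b).1 i)) = 0 from hz]
        simp
      rw [Finset.sum_congr rfl fun b _ => by rw [hW0 b, zero_mul], hz]
      simp
    · have hsup : ∀ i : II X, (μ i).prob (a i) ≠ 0 := fun i =>
        Finset.prod_ne_zero_iff.mp hz i (Finset.mem_univ i)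
    -- the fourth position differs from the first three
      have hod : ∀ j : II X, j.1 = kz u - 1 ∨ j.1 = kz u ∨ j.1 = kz u + 1 →
          (j, a j u) ≠ (i4, a i4 v) := by
        intro j hj heq
        rw [Prod.mk.injEq] at heq
        obtain ⟨hj4, hblk⟩ := heq
        rw [← hj4] at hblk
        have hu_mem : u ∈ a j u := ((μ j).isPartition (a j) (hsup j) u).1
        have hv_mem : v ∈ a j v := ((μ j).isPartition (a j) (hsup j) v).1
        rw [← hblk] at hv_mem
        have hbound := hbd j (a j) (hsup j) u u hu_mem v hv_mem
        have hDfj : Df j ≤ rr u / 2 := by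
          show (2:ℝ) ^ (j.1) / 4 ≤ rr u / 2
          have h1 : (2:ℝ) ^ (j.1) ≤ (2:ℝ) ^ (kz u + 1) :=
            zpow_le_zpow_right₀ (by norm_num) (by omega)
          have h2 : (2:ℝ) ^ (kz u + 1) = 2 * (2:ℝ) ^ (kz u) := by
            rw [zpow_add_one₀ (by norm_num : (2:ℝ) ≠ 0)]; ring
          linarith
        simp only [] at hbound
        linarith
      have hne12 : i1 ≠ i2 := by rw [Ne, hi1, hi2, Subtype.mk.injEq]; omega
      have hne13 : i1 ≠ i3 := by rw [Ne, hi1, hi3, Subtype.mk.injEq]; omega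
      have hne23 : i2 ≠ i3 := by rw [Ne, hi2, hi3, Subtype.mk.injEq]; omega
      have htrip1 : i1 ∈ trip u := mem_trip.mpr (by rw [hi1]; left; rfl)
      have htrip2 : i2 ∈ trip u := mem_trip.mpr (by rw [hi2]; right; left; rfl)
      have htrip3 : i3 ∈ trip u := mem_trip.mpr (by rw [hi3]; right; right; rfl)
      have hod1 : (i1, a i1 u) ≠ (i4, a i4 v) := hod i1 (by rw [hi1]; left; rfl)
      have hod2 : (i2, a i2 u) ≠ (i4, a i4 v) := hod i2 (by rw [hi2]; right; left; rfl)
      have hod3 : (i3, a i3 u) ≠ (i4, a i4 v) := hod i3 (by rw [hi3]; right; right; rfl)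
      set pos : Finset (II X × Finset X) :=
        {(i1, a i1 u), (i2, a i2 u), (i3, a i3 u), (i4, a i4 v)} with hpos
      set tf : (II X × Finset X) → Bool :=
        fun q => if q = (i4, a i4 v) then false else true with htf
      have hcardpos : pos.card = 4 := by
        rw [hpos]
        rw [Finset.card_insert_of_notMem (by
            simp only [Finset.mem_insert, Finset.mem_singleton]
            push_neg
            exact ⟨fun h => hne12 (congrArg Prod.fst h),
              fun h => hne13 (congrArg Prod.fst h), hod1⟩),
          Finset.card_insert_of_notMem (by
            simp only [Finset.mem_insert, Finset.mem_singleton]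
            push_neg
            exact ⟨fun h => hne23 (congrArg Prod.fst h), hod2⟩),
          Finset.card_insert_of_notMem (by
            simp only [Finset.mem_singleton]
            exact hod3),
          Finset.card_singleton]
      have hbits : ∀ b : (II X × Finset X) → Bool,
          ((bitsU u (a, b) ∧ bitV v (a, b)) ↔ ∀ q ∈ pos, b q = tf q) := by
        intro b
        constructor
        · rintro ⟨h1, h2⟩ q hq
          rw [hpos] at hq
          simp only [Finset.mem_insert, Finset.mem_singleton] at hq
          rcases hq with rfl | rfl | rfl | rfl
          · simp only [htf]; rw [if_neg hod1]; exact h1 i1 htrip1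
          · simp only [htf]; rw [if_neg hod2]; exact h1 i2 htrip2
          · simp only [htf]; rw [if_neg hod3]; exact h1 i3 htrip3
          · simp only [htf]; simpa [bitV] using h2
        · intro h
          refine ⟨?_, ?_⟩
          · intro i hi
            have hival := mem_trip.mp hi
            have : i = i1 ∨ i = i2 ∨ i = i3 := by
              rcases hival with h' | h' | h'
              · exact Or.inl (Subtype.ext h')
              · exact Or.inr (Or.inl (Subtype.ext h'))
              · exact Or.inr (Or.inr (Subtype.ext h'))
            rcases this with rfl | rfl | rfl
            · have := h (i1, a i1 u) (by rw [hpos]; simp)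
              simp only [htf] at this
              rwa [if_neg hod1] at this
            · have := h (i2, a i2 u) (by rw [hpos]; simp)
              simp only [htf] at this
              rwa [if_neg hod2] at this
            · have := h (i3, a i3 u) (by rw [hpos]; simp)
              simp only [htf] at this
              rwa [if_neg hod3] at this
          · have := h (i4, a i4 v) (by rw [hpos]; simp)
            simp only [htf] at this
            simpa [bitV] using this
      have h4le : 4 ≤ Fintype.card (II X × Finset X) := by
        calc 4 = pos.card := hcardpos.symm
          _ ≤ Fintype.card (II X × Finset X) := Finset.card_le_univ pos
      have hcount : (∑ b : (II X × Finset X) → Bool,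
          (if (bitsU u (a, b) ∧ bitV v (a, b)) then (1:ℝ) else 0))
          = (2:ℝ) ^ (Fintype.card (II X × Finset X) - 4) := by
        rw [Finset.sum_congr rfl fun b _ => by rw [if_congr (hbits b) rfl rfl]]
        rw [Finset.sum_boole]
        rw [show (Finset.filter (fun b : (II X × Finset X) → Bool =>
            ∀ q ∈ pos, b q = tf q) Finset.univ).card
          = 2 ^ (Fintype.card (II X × Finset X) - pos.card) from count_bool pos tf]
        rw [hcardpos]
        push_cast
        ring
      have hsplit : ∀ b : (II X × Finset X) → Bool,
          (if condE α u v (a, b) then (1:ℝ) else 0)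
          = (if PA a then (1:ℝ) else 0)
            * (if (bitsU u (a, b) ∧ bitV v (a, b)) then (1:ℝ) else 0) := by
        intro b
        have hPAiff : padsE α u (a, b) ↔ PA a := Iff.rfl
        by_cases hP : PA a
        · by_cases hB : bitsU u (a, b) ∧ bitV v (a, b)
          · rw [if_pos ⟨hPAiff.mpr hP, hB.1, hB.2⟩, if_pos hP, if_pos hB]; ring
          · rw [if_neg (fun hc => hB ⟨hc.2.1, hc.2.2⟩), if_pos hP, if_neg hB]; ring
        · rw [if_neg (fun hc => hP (hPAiff.mp hc.1)), if_neg hP]; ring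
      have hWval : ∀ b : (II X × Finset X) → Bool,
          WW μ (a, b) = (∏ i : II X, (μ i).prob (a i)) / NN X := fun b => rfl
      calc (∑ b : (II X × Finset X) → Bool,
            WW μ (a, b) * (if condE α u v (a, b) then 1 else 0))
          = ∑ b : (II X × Finset X) → Bool,
            ((∏ i : II X, (μ i).prob (a i)) / NN X * (if PA a then (1:ℝ) else 0))
              * (if (bitsU u (a, b) ∧ bitV v (a, b)) then (1:ℝ) else 0) := by
            refine Finset.sum_congr rfl fun b _ => ?_
            rw [hWval b, hsplit b]; ring
        _ = ((∏ i : II X, (μ i).prob (a i)) / NN X * (if PA a then (1:ℝ) else 0))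
              * ((2:ℝ) ^ (Fintype.card (II X × Finset X) - 4)) := by
            rw [← Finset.mul_sum, hcount]
        _ = (∏ i : II X, (μ i).prob (a i)) * ((if PA a then 1 else 0) * (1 / 16)) := by
            have hNval : NN X = (2:ℝ) ^ (Fintype.card (II X × Finset X)) := rfl
            have hpow : (2:ℝ) ^ (Fintype.card (II X × Finset X))
                = (2:ℝ) ^ (Fintype.card (II X × Finset X) - 4) * 2 ^ 4 := by
              rw [← pow_add, Nat.sub_add_cancel h4le]
            rw [hNval, hpow]
            have h2ne : (2:ℝ) ^ (Fintype.card (II X × Finset X) - 4) ≠ 0 := by positivity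
            field_simp
            ring
  rw [Finset.sum_congr rfl fun a _ => hInner a]
  -- now factor over the partition coordinates
  set F : II X → (X → Finset X) → ℝ := fun i P =>
    (μ i).prob P * (if i ∈ trip u then
      (if (∀ y : X, dist u y ≤ Df i / α → y ∈ P u) then (1:ℝ) else 0) else 1) with hF
  have hFa : ∀ a : II X → X → Finset X,
      (∏ i : II X, (μ i).prob (a i)) * (if PA a then (1:ℝ) else 0)
        = ∏ i : II X, F i (a i) := by
    intro a
    have hprodite : (if PA a then (1:ℝ) else 0)
        = ∏ i : II X, (if i ∈ trip u then
            (if (∀ y : X, dist u y ≤ Df i / α → y ∈ a i u) then (1:ℝ) else 0) else 1) := by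
      rw [Finset.prod_ite_mem Finset.univ (trip u)
        (fun i => (if (∀ y : X, dist u y ≤ Df i / α → y ∈ a i u) then (1:ℝ) else 0)),
        Finset.univ_inter]
      by_cases hP : PA a
      · rw [if_pos hP]
        rw [Finset.prod_congr rfl fun i hi => if_pos (hP i hi)]
        simp
      · rw [if_neg hP]
        have hP' : ¬ ∀ i ∈ trip u, ∀ y : X, dist u y ≤ Df i / α → y ∈ a i u := hP
        push_neg at hP'
        obtain ⟨i, hi, y, hy1, hy2⟩ := hP' 
        exact (Finset.prod_eq_zero hi (by rw [if_neg]; push_neg; exact ⟨y, hy1, hy2⟩)).symm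
    rw [hprodite, ← Finset.prod_mul_distrib]
  rw [Finset.sum_congr rfl fun a _ => by rw [← mul_assoc, hFa a]]
  rw [← Finset.sum_mul, sum_fun_prod F]
  have hfac : ∀ i : II X, (∑ P : X → Finset X, F i P)
      = if i ∈ trip u then
          (∑ P : X → Finset X,
            if (∀ y : X, dist u y ≤ Df i / α → y ∈ P u) then (μ i).prob P else 0)
        else 1 := by
    intro i
    by_cases hi : i ∈ trip u
    · rw [if_pos hi]
      refine Finset.sum_congr rfl fun P _ => ?_
      rw [hF]
      simp only [if_pos hi, mul_ite, mul_one, mul_zero]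
    · rw [if_neg hi]
      have : ∀ P : X → Finset X, F i P = (μ i).prob P := by
        intro P; rw [hF]; simp only [if_neg hi, mul_one]
      rw [Finset.sum_congr rfl fun P _ => this P, (μ i).sum_one]
  have hfinal : (1:ℝ) / 8 ≤ ∏ i : II X, ∑ P : X → Finset X, F i P := by
    rw [Finset.prod_congr rfl fun i _ => hfac i,
      Finset.prod_ite_mem Finset.univ (trip u) _, Finset.univ_inter]
    calc (1:ℝ)/8 = ∏ _i ∈ trip u, (1/2 : ℝ) := by
          rw [Finset.prod_const, card_trip]; norm_num
      _ ≤ _ := by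
          refine Finset.prod_le_prod (fun _ _ => by norm_num) (fun i _ => ?_)
          simpa using hpd i u
  nlinarith [hfinal]

private lemma key (p α : ℝ) (hp : 1 ≤ p) (hα : 1 ≤ α)
    (hpad : ∀ Δ : ℝ, 0 < Δ → ∃ μ : RandPartition X,
      μ.IsBounded (fun x y => dist x y) Δ ∧ μ.IsPadded (fun x y => dist x y) Δ α) :
    ∃ f : X → ℝ, (∀ x y : X, |f x - f y| ≤ dist x y) ∧
      ∑ u : X, ∑ v : X, dist u v ^ p ≤
        512 * 128 ^ p * α ^ p * ∑ u : X, ∑ v : X, |f u - f v| ^ p := by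
  have hp0 : (0:ℝ) ≤ p := by linarith
  have hpne : p ≠ 0 := by intro h; rw [h] at hp; norm_num at hp
  have hα0 : (0:ℝ) < α := by linarith
  by_cases hsmall : Fintype.card X ≤ 1
  · refine ⟨fun _ => 0, fun x y => by simpa using dist_nonneg, ?_⟩
    have hsub : Subsingleton X := Fintype.card_le_one_iff_subsingleton.mp hsmall
    have hL : ∑ u : X, ∑ v : X, dist u v ^ p = 0 := by
      refine Finset.sum_eq_zero fun u _ => Finset.sum_eq_zero fun v _ => ?_
      rw [Subsingleton.elim u v, dist_self, Real.zero_rpow hpne]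
    rw [hL]
    have hR : (0:ℝ) ≤ ∑ u : X, ∑ v : X, |(0:ℝ) - 0| ^ p := by
      refine Finset.sum_nonneg fun u _ => Finset.sum_nonneg fun v _ => ?_
      exact Real.rpow_nonneg (abs_nonneg _) p
    have h128 : (0:ℝ) ≤ 512 * 128 ^ p * α ^ p := by positivity
    exact mul_nonneg h128 hR
  · push_neg at hsmall
    have hn : 2 ≤ Fintype.card X := hsmall
    choose μ hbd hpd using fun i : II X => hpad (Df i) (Df_pos i)
    set n := Fintype.card X with hndef
    set ρ : X → ℝ := fun u => rr u / (64 * α) with hρ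
    have hρ0 : ∀ u : X, 0 ≤ ρ u := fun u => by
      have := (rr_pos hn u).le
      rw [hρ]
      positivity
    set Far : X → Finset X := fun u => Finset.univ.filter fun v => rr u / 2 < dist u v
      with hFar
    have hFarmem : ∀ {u v : X}, v ∈ Far u → rr u / 2 < dist u v := by
      intro u v hv
      rw [hFar] at hv
      exact (Finset.mem_filter.mp hv).2
    set G : OM X → ℝ := fun ω => ∑ x : X, ∑ y : X, |ff ω x - ff ω y| ^ p with hG
    have hGnn : ∀ ω : OM X, (0:ℝ) ≤ G ω := fun ω => by
      rw [hG]
      refine Finset.sum_nonneg fun x _ => Finset.sum_nonneg fun y _ => ?_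
      exact Real.rpow_nonneg (abs_nonneg _) p
    have hpoint : ∀ ω : OM X,
        WW μ ω * (∑ u : X, ∑ v ∈ Far u, (if condE α u v ω then (1:ℝ) else 0) * ρ u ^ p)
          ≤ WW μ ω * G ω := by
      intro ω
      rcases eq_or_ne (WW μ ω) 0 with h0 | h0
      · rw [h0, zero_mul, zero_mul]
      refine mul_le_mul_of_nonneg_left ?_ (WW_nonneg μ ω)
      have hsup : ∀ i : II X, (μ i).prob (ω.1 i) ≠ 0 := by
        intro i hzz
        apply h0
        unfold WW
        rw [Finset.prod_eq_zero (Finset.mem_univ i) hzz]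
        simp
      calc ∑ u : X, ∑ v ∈ Far u, (if condE α u v ω then (1:ℝ) else 0) * ρ u ^ p
          ≤ ∑ u : X, ∑ v ∈ Far u, |ff ω u - ff ω v| ^ p := by
            refine Finset.sum_le_sum fun u _ => Finset.sum_le_sum fun v hv => ?_
            by_cases hc : condE α u v ω
            · rw [if_pos hc, one_mul]
              exact Real.rpow_le_rpow (hρ0 u) (geom hn hα μ u v ω hsup hc) hp0
            · rw [if_neg hc, zero_mul]
              exact Real.rpow_nonneg (abs_nonneg _) p
        _ ≤ G ω := by
            rw [hG]
            refine Finset.sum_le_sum fun u _ => ?_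
            refine Finset.sum_le_sum_of_subset_of_nonneg (Finset.filter_subset _ _) ?_
            intro v _ _
            exact Real.rpow_nonneg (abs_nonneg _) p
    have hcnt : ∀ u : X, ((n - n / 2 : ℕ) : ℝ) ≤ ((Far u).card : ℝ) := by
      intro u
      have hhalf : (sball u (rr u / 2)).card < mm X :=
        rr_card_lt hn (by linarith [rr_pos hn u])
      have hFeq : Far u = Finset.univ \ sball u (rr u / 2) := by
        ext w
        rw [hFar]
        simp [sball, not_le]
      rw [hFeq, Finset.card_sdiff_of_subset (Finset.subset_univ _), Finset.card_univ]
      have hsb : (sball u (rr u / 2)).card ≤ n / 2 := by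
        unfold mm at hhalf
        omega
      have : n - n / 2 ≤ n - (sball u (rr u / 2)).card := by omega
      exact_mod_cast this
    -- the averaged lower bound
    have havg : ∑ u : X, ((n - n / 2 : ℕ) : ℝ) * (ρ u ^ p * (1 / 128))
        ≤ ∑ ω : OM X, WW μ ω * G ω := by
      have hstep1 : ∑ u : X, ((n - n / 2 : ℕ) : ℝ) * (ρ u ^ p * (1 / 128))
          ≤ ∑ u : X, ∑ v ∈ Far u, (ρ u ^ p * (1 / 128)) := by
        refine Finset.sum_le_sum fun u _ => ?_
        rw [Finset.sum_const, nsmul_eq_mul]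
        refine mul_le_mul_of_nonneg_right (hcnt u) ?_
        have := hρ0 u
        positivity
      have hstep2 : ∑ u : X, ∑ v ∈ Far u, (ρ u ^ p * (1 / 128))
          ≤ ∑ u : X, ∑ v ∈ Far u,
              (ρ u ^ p * ∑ ω : OM X, WW μ ω * (if condE α u v ω then (1:ℝ) else 0)) := by
        refine Finset.sum_le_sum fun u _ => Finset.sum_le_sum fun v hv => ?_
        refine mul_le_mul_of_nonneg_left ?_ (Real.rpow_nonneg (hρ0 u) p)
        exact core hn hα μ hbd hpd u v (hFarmem hv)
      have hswap : ∑ u : X, ∑ v ∈ Far u,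
            (ρ u ^ p * ∑ ω : OM X, WW μ ω * (if condE α u v ω then (1:ℝ) else 0))
          = ∑ ω : OM X,
              WW μ ω * (∑ u : X, ∑ v ∈ Far u, (if condE α u v ω then (1:ℝ) else 0) * ρ u ^ p) := by
        calc ∑ u : X, ∑ v ∈ Far u,
              (ρ u ^ p * ∑ ω : OM X, WW μ ω * (if condE α u v ω then (1:ℝ) else 0))
            = ∑ u : X, ∑ v ∈ Far u, ∑ ω : OM X,
                ρ u ^ p * (WW μ ω * (if condE α u v ω then (1:ℝ) else 0)) := by
              refine Finset.sum_congr rfl fun u _ => Finset.sum_congr rfl fun v _ => ?_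
              rw [Finset.mul_sum]
          _ = ∑ u : X, ∑ ω : OM X, ∑ v ∈ Far u,
                ρ u ^ p * (WW μ ω * (if condE α u v ω then (1:ℝ) else 0)) := by
              exact Finset.sum_congr rfl fun u _ => Finset.sum_comm
          _ = ∑ ω : OM X, ∑ u : X, ∑ v ∈ Far u,
                ρ u ^ p * (WW μ ω * (if condE α u v ω then (1:ℝ) else 0)) :=
              Finset.sum_comm
          _ = ∑ ω : OM X,
              WW μ ω * (∑ u : X, ∑ v ∈ Far u, (if condE α u v ω then (1:ℝ) else 0) * ρ u ^ p) := by
              refine Finset.sum_congr rfl fun ω _ => ?_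
              rw [Finset.mul_sum]
              refine Finset.sum_congr rfl fun u _ => ?_
              rw [Finset.mul_sum]
              refine Finset.sum_congr rfl fun v _ => ?_
              ring
      calc ∑ u : X, ((n - n / 2 : ℕ) : ℝ) * (ρ u ^ p * (1 / 128))
          ≤ ∑ u : X, ∑ v ∈ Far u, (ρ u ^ p * (1 / 128)) := hstep1
        _ ≤ _ := hstep2
        _ = _ := hswap
        _ ≤ ∑ ω : OM X, WW μ ω * G ω := Finset.sum_le_sum fun ω _ => hpoint ω
    obtain ⟨ω0, hω0⟩ := exists_point_ge (WW μ) G (WW_nonneg μ) (WW_sum μ) havg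
    refine ⟨ff ω0, ff_lip ω0, ?_⟩
    -- final arithmetic
    set R : ℝ := ∑ u : X, rr u ^ p with hR
    have hRnn : 0 ≤ R := by
      rw [hR]
      exact Finset.sum_nonneg fun u _ => Real.rpow_nonneg (rr_pos hn u).le p
    have hZpos : (0:ℝ) < (64 * α) ^ p := by positivity
    have hρp : ∀ u : X, ρ u ^ p = rr u ^ p / (64 * α) ^ p := fun u => by
      show (rr u / (64 * α)) ^ p = rr u ^ p / (64 * α) ^ p
      exact Real.div_rpow (rr_pos hn u).le (by positivity : (0:ℝ) ≤ 64 * α) p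
    have hc0 : (n : ℝ) / 2 ≤ ((n - n / 2 : ℕ) : ℝ) := by
      have h : (n : ℕ) ≤ 2 * (n - n / 2) := by omega
      have h2 : ((n : ℕ) : ℝ) ≤ ((2 * (n - n / 2) : ℕ) : ℝ) := by exact_mod_cast h
      push_cast at h2
      linarith
    have ht0 : (n : ℝ) * R / (256 * (64 * α) ^ p) ≤ G ω0 := by
      refine le_trans ?_ hω0
      have hcalc : ∑ u : X, ((n - n / 2 : ℕ) : ℝ) * (ρ u ^ p * (1 / 128))
          = ((n - n / 2 : ℕ) : ℝ) * (1 / 128) / (64 * α) ^ p * R := by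
        calc ∑ u : X, ((n - n / 2 : ℕ) : ℝ) * (ρ u ^ p * (1 / 128))
            = ∑ u : X, ((n - n / 2 : ℕ) : ℝ) * (1 / 128) / (64 * α) ^ p * rr u ^ p := by
              refine Finset.sum_congr rfl fun u _ => ?_
              rw [hρp u]
              ring
          _ = ((n - n / 2 : ℕ) : ℝ) * (1 / 128) / (64 * α) ^ p * R := by
              rw [hR, ← Finset.mul_sum]
      rw [hcalc]
      have hRZ : 0 ≤ R / (64 * α) ^ p := div_nonneg hRnn hZpos.le
      have hrw1 : (n : ℝ) * R / (256 * (64 * α) ^ p) = ((n:ℝ) / 256) * (R / (64 * α) ^ p) := by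
        ring
      have hrw2 : ((n - n / 2 : ℕ) : ℝ) * (1 / 128) / (64 * α) ^ p * R
          = (((n - n / 2 : ℕ) : ℝ) / 128) * (R / (64 * α) ^ p) := by
        ring
      rw [hrw1, hrw2]
      refine mul_le_mul_of_nonneg_right ?_ hRZ
      linarith
    have hnR : (n : ℝ) * R ≤ 256 * (64 * α) ^ p * G ω0 := by
      rw [div_le_iff₀ (by positivity : (0:ℝ) < 256 * (64 * α) ^ p)] at ht0
      linarith
    have hpair : ∀ u v : X, dist u v ^ p ≤ 2 ^ p * (rr u ^ p + rr v ^ p) := by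
      intro u v
      have h2p : (0:ℝ) ≤ (2:ℝ) ^ p := Real.rpow_nonneg (by norm_num) p
      have hru := (rr_pos hn u).le
      have hrv := (rr_pos hn v).le
      have hupnn : (0:ℝ) ≤ rr u ^ p := Real.rpow_nonneg hru p
      have hvpnn : (0:ℝ) ≤ rr v ^ p := Real.rpow_nonneg hrv p
      rcases le_total (rr u) (rr v) with hle | hle
      · calc dist u v ^ p ≤ (2 * rr v) ^ p :=
            Real.rpow_le_rpow dist_nonneg (by linarith [rr_pair hn u v]) hp0
          _ = 2 ^ p * rr v ^ p := Real.mul_rpow (by norm_num) hrv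
          _ ≤ 2 ^ p * (rr u ^ p + rr v ^ p) := by nlinarith
      · calc dist u v ^ p ≤ (2 * rr u) ^ p :=
            Real.rpow_le_rpow dist_nonneg (by linarith [rr_pair hn u v]) hp0
          _ = 2 ^ p * rr u ^ p := Real.mul_rpow (by norm_num) hru
          _ ≤ 2 ^ p * (rr u ^ p + rr v ^ p) := by nlinarith
    have hsum2 : ∑ u : X, ∑ v : X, dist u v ^ p ≤ 2 ^ p * (2 * ((n:ℝ) * R)) := by
      have hinner : ∀ u : X, ∑ v : X, (2:ℝ) ^ p * (rr u ^ p + rr v ^ p)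
          = (2:ℝ) ^ p * ((n:ℝ) * rr u ^ p + R) := by
        intro u
        rw [← Finset.mul_sum]
        congr 1
        rw [Finset.sum_add_distrib, Finset.sum_const, nsmul_eq_mul, Finset.card_univ, hR,
          ← hndef]
      calc ∑ u : X, ∑ v : X, dist u v ^ p
          ≤ ∑ u : X, ∑ v : X, (2:ℝ) ^ p * (rr u ^ p + rr v ^ p) :=
            Finset.sum_le_sum fun u _ => Finset.sum_le_sum fun v _ => hpair u v
        _ = ∑ u : X, (2:ℝ) ^ p * ((n:ℝ) * rr u ^ p + R) :=
            Finset.sum_congr rfl fun u _ => hinner u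
        _ = (2:ℝ) ^ p * ((n:ℝ) * R + (n:ℝ) * R) := by
            rw [← Finset.mul_sum]
            congr 1
            rw [Finset.sum_add_distrib, Finset.sum_const, nsmul_eq_mul, Finset.card_univ,
              ← Finset.mul_sum, ← hR, ← hndef]
        _ = 2 ^ p * (2 * ((n:ℝ) * R)) := by ring
    have hZ : (64 * α : ℝ) ^ p = 64 ^ p * α ^ p :=
      Real.mul_rpow (by norm_num) hα0.le
    have h128 : (128:ℝ) ^ p = 2 ^ p * 64 ^ p := by
      rw [← Real.mul_rpow (by norm_num) (by norm_num)]
      norm_num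
    have h2p : (0:ℝ) ≤ (2:ℝ) ^ p := Real.rpow_nonneg (by norm_num) p
    calc ∑ u : X, ∑ v : X, dist u v ^ p
        ≤ 2 ^ p * (2 * ((n:ℝ) * R)) := hsum2
      _ ≤ 2 ^ p * (2 * (256 * (64 * α) ^ p * G ω0)) := by
          refine mul_le_mul_of_nonneg_left (by linarith) h2p
      _ = 512 * 128 ^ p * α ^ p * G ω0 := by
          rw [hZ, h128]
          ring

private def detPart (P : X → Finset X)
    (hP : ∀ x : X, x ∈ P x ∧ ∀ y ∈ P x, P y = P x) : RandPartition X where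
  prob := fun Q => if Q = P then 1 else 0
  nonneg := fun Q => by split <;> norm_num
  sum_one := by
    rw [Finset.sum_ite_eq' Finset.univ P (fun _ => (1:ℝ))]
    simp
  isPartition := fun Q hQ x => by
    have hQP : Q = P := by
      by_contra h
      exact hQ (if_neg h)
    rw [hQP]
    exact hP x

private lemma detPart_bounded (P : X → Finset X)
    (hP : ∀ x : X, x ∈ P x ∧ ∀ y ∈ P x, P y = P x) {Δ : ℝ}
    (h : ∀ x : X, ∀ y ∈ P x, ∀ z ∈ P x, dist y z ≤ Δ) :
    (detPart P hP).IsBounded (fun x y => dist x y) Δ := by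
  intro Q hQ x y hy z hz
  have hQP : Q = P := by
    by_contra hne
    exact hQ (if_neg hne)
  subst hQP
  exact h x y hy z hz

private lemma detPart_padded (P : X → Finset X)
    (hP : ∀ x : X, x ∈ P x ∧ ∀ y ∈ P x, P y = P x) {Δ α' : ℝ}
    (h : ∀ x : X, ∀ y : X, dist x y ≤ Δ / α' → y ∈ P x) :
    (detPart P hP).IsPadded (fun x y => dist x y) Δ α' := by
  intro x
  show (1:ℝ)/2 ≤ ∑ Q : X → Finset X,
    if ∀ y : X, dist x y ≤ Δ / α' → y ∈ Q x then (detPart P hP).prob Q else 0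
  have hterm : (if ∀ y : X, dist x y ≤ Δ / α' → y ∈ P x
      then (detPart P hP).prob P else 0) = 1 := by
    rw [if_pos (h x)]
    show (if P = P then (1:ℝ) else 0) = 1
    rw [if_pos rfl]
  calc (1:ℝ)/2 ≤ 1 := by norm_num
    _ = _ := hterm.symm
    _ ≤ _ := by
      refine Finset.single_le_sum (f := fun Q : X → Finset X =>
        if ∀ y : X, dist x y ≤ Δ / α' → y ∈ Q x then (detPart P hP).prob Q else 0)
        (fun Q _ => ?_) (Finset.mem_univ P)
      split
      · exact (detPart P hP).nonneg Q
      · exact le_refl 0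

private lemma singClos : ∀ x : X, x ∈ ({x} : Finset X) ∧
    ∀ y ∈ ({x} : Finset X), ({y} : Finset X) = {x} := fun x =>
  ⟨Finset.mem_singleton_self x, fun y hy => by rw [Finset.mem_singleton.mp hy]⟩

end Aux

/-- For every `p ≥ 1` there is a constant `C_p ≥ 1` such that every
finite metric space `(X, d)` admits a non-expansive map `f : X → ℝ` with
`Σ_{u,v} d(u,v)^p ≤ C_p · α(X,d)^p · Σ_{u,v} |f(u) - f(v)|^p`. -/
theorem statement_14 (p : ℝ) (hp : 1 ≤ p) :
    ∃ C : ℝ, 1 ≤ C ∧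
      ∀ (X : Type) [MetricSpace X] [Fintype X] [DecidableEq X],
        ∃ f : X → ℝ, (∀ x y : X, |f x - f y| ≤ dist x y) ∧
          ∑ u : X, ∑ v : X, dist u v ^ p ≤
            C * paddedModulus X (fun x y => dist x y) ^ p *
              ∑ u : X, ∑ v : X, |f u - f v| ^ p := by
  have hp0 : (0:ℝ) ≤ p := by linarith
  refine ⟨512 * 256 ^ p, ?_, ?_⟩
  · have h1 : (1:ℝ) ≤ (256:ℝ) ^ p := by
      calc (1:ℝ) = (256:ℝ) ^ (0:ℝ) := (Real.rpow_zero _).symm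
        _ ≤ _ := Real.rpow_le_rpow_of_exponent_le (by norm_num) hp0
    nlinarith
  · intro X _ _ _
    have hwit : ∃ α₀ : ℝ, 1 ≤ α₀ ∧ ∀ Δ : ℝ, 0 < Δ →
        ∃ μ : RandPartition X, μ.IsBounded (fun x y => dist x y) Δ ∧
          μ.IsPadded (fun x y => dist x y) Δ α₀ := by
      by_cases hc : Fintype.card X ≤ 1
      · have hsub : Subsingleton X := Fintype.card_le_one_iff_subsingleton.mp hc
        refine ⟨1, le_refl 1, fun Δ hΔ => ?_⟩
        refine ⟨detPart (fun x => ({x} : Finset X)) singClos, ?_, ?_⟩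
        · refine detPart_bounded _ _ fun x y hy z hz => ?_
          rw [Finset.mem_singleton.mp hy, Finset.mem_singleton.mp hz, dist_self]
          exact hΔ.le
        · refine detPart_padded _ _ fun x y _ => ?_
          rw [Finset.mem_singleton]
          exact Subsingleton.elim y x
      · push_neg at hc
        obtain ⟨a0, b0, hab⟩ := Fintype.exists_pair_of_one_lt_card hc
        set DP : Finset ℝ := Finset.univ.image fun q : X × X => dist q.1 q.2 with hDP
        have hDPne : DP.Nonempty :=
          ⟨dist a0 b0, Finset.mem_image.mpr ⟨(a0, b0), Finset.mem_univ _, rfl⟩⟩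
        set Dmax := DP.max' hDPne with hDmax
        set EP : Finset ℝ := (Finset.univ.filter fun q : X × X => q.1 ≠ q.2).image
          (fun q : X × X => dist q.1 q.2) with hEP
        have hEPne : EP.Nonempty :=
          ⟨dist a0 b0, Finset.mem_image.mpr ⟨(a0, b0), by simp [hab], rfl⟩⟩
        set ε := EP.min' hEPne with hε
        have hεpos : 0 < ε := by
          obtain ⟨q, hq, hq2⟩ := Finset.mem_image.mp (EP.min'_mem hEPne)
          have hq1 : q.1 ≠ q.2 := (Finset.mem_filter.mp hq).2
          rw [hε, ← hq2]
          exact dist_pos.mpr hq1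
        have hεle : ∀ x y : X, x ≠ y → ε ≤ dist x y := fun x y hxy => by
          rw [hε]
          exact Finset.min'_le EP _ (Finset.mem_image.mpr ⟨(x, y), by simp [hxy], rfl⟩)
        have hDle : ∀ x y : X, dist x y ≤ Dmax := fun x y => by
          rw [hDmax]
          exact Finset.le_max' DP _ (Finset.mem_image.mpr ⟨(x, y), Finset.mem_univ _, rfl⟩)
        have hD0 : 0 ≤ Dmax := le_trans dist_nonneg (hDle a0 b0)
        set α₀ := Dmax / ε + 1 with hα₀
        have hα₀1 : 1 ≤ α₀ := by
          rw [hα₀]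
          linarith [div_nonneg hD0 hεpos.le]
        have hα₀pos : (0:ℝ) < α₀ := by linarith
        refine ⟨α₀, hα₀1, fun Δ hΔ => ?_⟩
        rcases le_or_gt Dmax Δ with hcase | hcase
        · refine ⟨detPart (fun _ => (Finset.univ : Finset X))
            (fun x => ⟨Finset.mem_univ x, fun y _ => rfl⟩), ?_, ?_⟩
          · exact detPart_bounded _ _ fun x y _ z _ => le_trans (hDle y z) hcase
          · exact detPart_padded _ _ fun x y _ => Finset.mem_univ y
        · refine ⟨detPart (fun x => ({x} : Finset X)) singClos, ?_, ?_⟩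
          · refine detPart_bounded _ _ fun x y hy z hz => ?_
            rw [Finset.mem_singleton.mp hy, Finset.mem_singleton.mp hz, dist_self]
            exact hΔ.le
          · refine detPart_padded _ _ fun x y hxy => ?_
            rw [Finset.mem_singleton]
            by_contra hne
            have h1 : ε ≤ dist x y := hεle x y (fun h => hne h.symm)
            have hεα : ε * α₀ = Dmax + ε := by
              rw [hα₀]
              field_simp
            have h2 : Δ / α₀ < ε := by
              rw [div_lt_iff₀ hα₀pos]
              linarith
            linarith
    obtain ⟨α₀, hα₀⟩ := hwit
    have hSne : Set.Nonempty {α : ℝ | 1 ≤ α ∧ ∀ Δ : ℝ, 0 < Δ →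
        ∃ μ : RandPartition X, μ.IsBounded (fun x y => dist x y) Δ ∧
          μ.IsPadded (fun x y => dist x y) Δ α} := ⟨α₀, hα₀⟩
    set A := paddedModulus X (fun x y => dist x y) with hA
    have hAS : A = sInf {α : ℝ | 1 ≤ α ∧ ∀ Δ : ℝ, 0 < Δ →
        ∃ μ : RandPartition X, μ.IsBounded (fun x y => dist x y) Δ ∧
          μ.IsPadded (fun x y => dist x y) Δ α} := by
      rw [hA]; rfl
    have hA1 : 1 ≤ A := by
      rw [hAS]
      exact le_csInf hSne fun b hb => hb.1
    obtain ⟨α, hαS, hαlt⟩ := Real.lt_sInf_add_pos hSne (show (0:ℝ) < A by linarith)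
    rw [← hAS] at hαlt
    obtain ⟨f, hf, hineq⟩ := key p α hp hαS.1 hαS.2
    refine ⟨f, hf, le_trans hineq ?_⟩
    have hsum0 : 0 ≤ ∑ u : X, ∑ v : X, |f u - f v| ^ p :=
      Finset.sum_nonneg fun u _ => Finset.sum_nonneg fun v _ =>
        Real.rpow_nonneg (abs_nonneg _) p
    have hα1 : (1:ℝ) ≤ α := hαS.1
    have hcoef : 512 * 128 ^ p * α ^ p ≤ 512 * 256 ^ p * A ^ p := by
      have h1 : α ^ p ≤ (2 * A) ^ p :=
        Real.rpow_le_rpow (by linarith) (by linarith) hp0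
      have h2 : (2 * A : ℝ) ^ p = 2 ^ p * A ^ p := Real.mul_rpow (by norm_num) (by linarith)
      have h3 : (256:ℝ) ^ p = 128 ^ p * 2 ^ p := by
        rw [← Real.mul_rpow (by norm_num) (by norm_num)]
        norm_num
      have h128nn : (0:ℝ) ≤ (128:ℝ) ^ p := Real.rpow_nonneg (by norm_num) p
      calc 512 * 128 ^ p * α ^ p
          ≤ 512 * 128 ^ p * (2 ^ p * A ^ p) := by
            rw [← h2]
            exact mul_le_mul_of_nonneg_left h1 (by positivity)
        _ = 512 * 256 ^ p * A ^ p := by rw [h3]; ring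
    exact mul_le_mul_of_nonneg_right hcoef hsum0

end Formal
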